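/- Let X, X̃ ∈ ℝ^{L×n}, let G ∈ ℝ^{L×K} have columns consisting of orthonormal eigenvectors of XXᵀ corresponding to its K largest eigenvalues λ_1 ≥ … ≥ λ_K, and similarly let G̃ ∈ ℝ^{L×K} consist of top-K orthonormal eigenvectors of X̃X̃ᵀ. If λ_K > λ_{K+1} (where λ_j are the eigenvalues of XXᵀ in decreasing order), then ‖GGᵀ − G̃G̃ᵀ‖_F ≤ (2/(λ_K − λ_{K+1})) · ‖XXᵀ − X̃X̃ᵀ‖_F. -/

import Mathlib

open Matrix

/-- Frobenius norm of a real matrix. -/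
noncomputable def frobNorm {p q : Type*} [Fintype p] [Fintype q]
    (A : Matrix p q ℝ) : ℝ :=
  Real.sqrt (∑ i, ∑ j, (A i j) ^ 2)

/-- trace of M * Mᵀ is sum of squares of entries -/
lemma trace_mul_transpose_self {L : ℕ} (M : Matrix (Fin L) (Fin L) ℝ) :
    Matrix.trace (M * Mᵀ) = ∑ i, ∑ j, (M i j) ^ 2 := by
  simp [Matrix.trace, Matrix.mul_apply, Matrix.diag, sq]

/-- columns of an orthogonal matrix are orthonormal -/
lemma cols_orthonormal {L K : ℕ} (hKL : K < L)
    (U : Matrix (Fin L) (Fin L) ℝ) (hU : Uᵀ * U = 1)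
    (G : Matrix (Fin L) (Fin K) ℝ)
    (hG : ∀ i k, G i k = U i (Fin.castLE hKL.le k)) :
    Gᵀ * G = 1 := by
  ext k k'
  have h := congrFun (congrFun hU (Fin.castLE hKL.le k)) (Fin.castLE hKL.le k')
  simp only [Matrix.mul_apply, Matrix.transpose_apply, Matrix.one_apply] at h ⊢
  simp only [hG]
  rw [h]
  simp [Fin.castLE_inj]

section J
variable {L K : ℕ} (hKL : K < L)

noncomputable def Jmat (hKL : K < L) : Matrix (Fin L) (Fin K) ℝ :=
  Matrix.of fun i k => if i = Fin.castLE hKL.le k then 1 else 0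

lemma G_eq_U_mul_J (U : Matrix (Fin L) (Fin L) ℝ)
    (G : Matrix (Fin L) (Fin K) ℝ)
    (hG : ∀ i k, G i k = U i (Fin.castLE hKL.le k)) :
    G = U * Jmat hKL := by
  ext i k
  simp [Jmat, Matrix.mul_apply, hG, mul_ite]

lemma J_mul_Jt :
    Jmat hKL * (Jmat hKL)ᵀ =
      Matrix.diagonal (fun i : Fin L => if (i : ℕ) < K then (1:ℝ) else 0) := by
  ext i j
  simp only [Jmat, Matrix.mul_apply, Matrix.transpose_apply, Matrix.of_apply,
    Matrix.diagonal_apply]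
  by_cases hij : i = j
  · subst hij
    simp only [if_pos rfl]
    by_cases hi : (i : ℕ) < K
    · rw [if_pos hi, Finset.sum_eq_single ⟨(i : ℕ), hi⟩]
      · have : i = Fin.castLE hKL.le ⟨(i : ℕ), hi⟩ := by
          apply Fin.ext; simp
        simp [← this]
      · intro k _ hk
        have : i ≠ Fin.castLE hKL.le k := by
          intro h
          apply hk
          apply Fin.ext
          simp [h]
        simp [this]
      · simp
    · rw [if_neg hi]
      apply Finset.sum_eq_zero
      intro k _
      have : i ≠ Fin.castLE hKL.le k := by
        intro h
        apply hi
        rw [h]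
        simpa using k.2
      simp [this]
  · rw [if_neg hij]
    apply Finset.sum_eq_zero
    intro k _
    by_cases h1 : i = Fin.castLE hKL.le k
    · have h2 : j ≠ Fin.castLE hKL.le k := fun h => hij (h1.trans h.symm)
      simp [h2]
    · simp [h1]

end J

lemma key_ineq {L K : ℕ} (hK0 : 0 < K) (hKL : K < L)
    (lam : Fin L → ℝ) (hlam : Antitone lam)
    (U : Matrix (Fin L) (Fin L) ℝ) (hU : Uᵀ * U = 1)
    (G : Matrix (Fin L) (Fin K) ℝ)
    (hG : ∀ i k, G i k = U i (Fin.castLE hKL.le k))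
    (H : Matrix (Fin L) (Fin K) ℝ) (hH : Hᵀ * H = 1) :
    ((lam ⟨K - 1, Nat.lt_of_le_of_lt (Nat.sub_le K 1) hKL⟩ - lam ⟨K, hKL⟩) / 2) *
      (∑ i, ∑ j, ((G * Gᵀ - H * Hᵀ) i j) ^ 2) ≤
      Matrix.trace (U * Matrix.diagonal lam * Uᵀ * (G * Gᵀ - H * Hᵀ)) := by
  have hUU : U * Uᵀ = 1 := mul_eq_one_comm.mp hU
  set P : Matrix (Fin L) (Fin L) ℝ := G * Gᵀ with hP
  set Q : Matrix (Fin L) (Fin L) ℝ := H * Hᵀ with hQ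
  set R : Matrix (Fin L) (Fin L) ℝ := Uᵀ * Q * U with hR
  set d : Fin L → ℝ := fun i => if (i : ℕ) < K then 1 else 0 with hd
  set J : Matrix (Fin L) (Fin K) ℝ := Jmat hKL with hJ
  have hGJ : G = U * J := G_eq_U_mul_J hKL U G hG
  have hJJT : J * Jᵀ = Matrix.diagonal d := J_mul_Jt hKL
  have hGG : Gᵀ * G = 1 := cols_orthonormal hKL U hU G hG
  -- UᵀPU = diagonal d
  have hUPU : Uᵀ * P * U = Matrix.diagonal d := by
    rw [hP, hGJ, Matrix.transpose_mul]
    have : Uᵀ * (U * J * (Jᵀ * Uᵀ)) * U = Uᵀ * U * (J * Jᵀ) * (Uᵀ * U) := by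
      simp only [Matrix.mul_assoc]
    rw [this, hU, hJJT, one_mul, mul_one]
  -- idempotence
  have hQQ : Q * Q = Q := by
    rw [hQ]
    have h : H * Hᵀ * (H * Hᵀ) = H * (Hᵀ * H) * Hᵀ := by simp only [Matrix.mul_assoc]
    rw [h, hH, Matrix.mul_one]
  have hPP : P * P = P := by
    rw [hP]
    have h : G * Gᵀ * (G * Gᵀ) = G * (Gᵀ * G) * Gᵀ := by simp only [Matrix.mul_assoc]
    rw [h, hGG, Matrix.mul_one]
  have hQT : Qᵀ = Q := by rw [hQ, Matrix.transpose_mul, Matrix.transpose_transpose]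
  -- diagonal entries of R in [0,1]
  have hR0 : ∀ i, 0 ≤ R i i := by
    intro i
    have hRB : R = (Uᵀ * H) * (Uᵀ * H)ᵀ := by
      rw [hR, hQ, Matrix.transpose_mul, Matrix.transpose_transpose]
      simp only [Matrix.mul_assoc]
    rw [hRB]
    simp only [Matrix.mul_apply, Matrix.transpose_apply]
    exact Finset.sum_nonneg fun k _ => mul_self_nonneg _
  have hR1 : ∀ i, R i i ≤ 1 := by
    intro i
    set C : Matrix (Fin L) (Fin L) ℝ := (1 - Q) * U with hC
    have h1Q : (1 - Q) * (1 - Q) = 1 - Q := by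
      rw [sub_mul, Matrix.one_mul, mul_sub, Matrix.mul_one, hQQ]
      abel
    have h1R : (1 : Matrix (Fin L) (Fin L) ℝ) - R = Cᵀ * C := by
      rw [hC, Matrix.transpose_mul, Matrix.transpose_sub, Matrix.transpose_one, hQT]
      have h : Uᵀ * (1 - Q) * ((1 - Q) * U) = Uᵀ * ((1 - Q) * (1 - Q)) * U := by
        simp only [Matrix.mul_assoc]
      rw [h, h1Q, Matrix.mul_sub, Matrix.mul_one, Matrix.sub_mul, hU, hR]
    have : 0 ≤ ((1 : Matrix (Fin L) (Fin L) ℝ) - R) i i := by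
      rw [h1R]
      simp only [Matrix.mul_apply, Matrix.transpose_apply]
      exact Finset.sum_nonneg fun k _ => mul_self_nonneg _
    simp only [Matrix.sub_apply, Matrix.one_apply_eq] at this
    linarith
  -- trace R = K
  have htrR : Matrix.trace R = (K : ℝ) := by
    have h1 : Matrix.trace R = Matrix.trace Q := by
      rw [hR, Matrix.trace_mul_comm (Uᵀ * Q) U, ← Matrix.mul_assoc, hUU, Matrix.one_mul]
    have h2 : Matrix.trace Q = (K : ℝ) := by
      rw [hQ, Matrix.trace_mul_comm, hH, Matrix.trace_one]
      simp
    rw [h1, h2]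
  -- conjugation preserves trace
  have htc : ∀ M : Matrix (Fin L) (Fin L) ℝ,
      Matrix.trace (Uᵀ * M * U) = Matrix.trace M := by
    intro M
    rw [Matrix.trace_mul_comm (Uᵀ * M) U, ← Matrix.mul_assoc, hUU, Matrix.one_mul]
  have hdiagmul : ∀ (e : Fin L → ℝ) (M : Matrix (Fin L) (Fin L) ℝ),
      Matrix.trace (Matrix.diagonal e * M) = ∑ i, e i * M i i := by
    intro e M
    simp [Matrix.trace, Matrix.diag, Matrix.mul_apply, Matrix.diagonal_apply,
      ite_mul, zero_mul]
  have htrP : Matrix.trace P = (K : ℝ) := by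
    rw [hP, Matrix.trace_mul_comm, hGG, Matrix.trace_one]
    simp
  have hsumd : ∑ i, d i = (K : ℝ) := by
    have h := htc P
    rw [hUPU, Matrix.trace_diagonal, htrP] at h
    exact h
  -- trace (P * Q) = ∑ i, d i * R i i
  have hDR : Matrix.diagonal d * R = Uᵀ * (P * Q) * U := by
    rw [← hUPU, hR]
    have h : Uᵀ * P * U * (Uᵀ * Q * U) = Uᵀ * (P * ((U * Uᵀ) * (Q * U))) := by
      simp only [Matrix.mul_assoc]
    rw [h, hUU, Matrix.one_mul]
    simp only [Matrix.mul_assoc]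
  have htrPQ : Matrix.trace (P * Q) = ∑ i, d i * R i i := by
    rw [← htc (P * Q), ← hDR, hdiagmul]
  -- Frobenius sum
  have htrQ : Matrix.trace Q = (K : ℝ) := by
    rw [hQ, Matrix.trace_mul_comm, hH, Matrix.trace_one]
    simp
  have hPT : Pᵀ = P := by rw [hP, Matrix.transpose_mul, Matrix.transpose_transpose]
  have hPQT : (P - Q)ᵀ = P - Q := by rw [Matrix.transpose_sub, hPT, hQT]
  have hfrob : ∑ i, ∑ j, ((P - Q) i j) ^ 2
      = 2 * (K : ℝ) - 2 * ∑ i, d i * R i i := by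
    rw [← trace_mul_transpose_self (P - Q), hPQT]
    have hexp : (P - Q) * (P - Q) = P * P - P * Q - (Q * P - Q * Q) := by
      rw [Matrix.sub_mul, Matrix.mul_sub, Matrix.mul_sub]
    rw [hexp, Matrix.trace_sub, Matrix.trace_sub, Matrix.trace_sub, hPP, hQQ,
      Matrix.trace_mul_comm Q P, htrPQ, htrP, htrQ]
    ring
  -- trace (A * (P - Q)) = ∑ i, lam i * (d i - R i i)
  have htrA : Matrix.trace (U * Matrix.diagonal lam * Uᵀ * (P - Q))
      = ∑ i, lam i * (d i - R i i) := by
    have h1 : U * Matrix.diagonal lam * Uᵀ * (P - Q)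
        = U * (Matrix.diagonal lam * Uᵀ * (P - Q)) := by
      simp only [Matrix.mul_assoc]
    rw [h1, Matrix.trace_mul_comm]
    have h2' : Matrix.diagonal lam * Uᵀ * (P - Q) * U
        = Matrix.diagonal lam * (Uᵀ * (P - Q) * U) := by
      simp only [Matrix.mul_assoc]
    have h3 : Uᵀ * (P - Q) * U = Matrix.diagonal d - R := by
      rw [Matrix.mul_sub, Matrix.sub_mul, hUPU, hR]
    rw [h2', h3, hdiagmul]
    apply Finset.sum_congr rfl
    intro i _
    simp [Matrix.sub_apply, Matrix.diagonal_apply_eq]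
  -- the scalar inequality
  set la : ℝ := lam ⟨K - 1, by omega⟩ with hla
  set lb : ℝ := lam ⟨K, hKL⟩ with hlb
  set S1 : ℝ := ∑ i : Fin L, (if (i : ℕ) < K then R i i else 0) with hS1
  set S2 : ℝ := ∑ i : Fin L, (if (i : ℕ) < K then 0 else R i i) with hS2
  have hdR : ∑ i, d i * R i i = S1 := by
    apply Finset.sum_congr rfl
    intro i _
    by_cases h : (i : ℕ) < K <;> simp [hd, h]
  have hS12 : S1 + S2 = (K : ℝ) := by
    rw [hS1, hS2, ← Finset.sum_add_distrib]
    rw [← htrR]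
    apply Finset.sum_congr rfl
    intro i _
    by_cases h : (i : ℕ) < K <;> simp [h]
  have hlab : lb ≤ la := by
    apply hlam
    simp only [Fin.le_def, Fin.val_mk]
    omega
  have hterm : ∀ i : Fin L,
      (if (i : ℕ) < K then la * (1 - R i i) else lb * (0 - R i i))
        ≤ lam i * (d i - R i i) := by
    intro i
    by_cases h : (i : ℕ) < K
    · rw [if_pos h]
      have hdi : d i = 1 := by simp [hd, h]
      rw [hdi]
      apply mul_le_mul_of_nonneg_right
      · apply hlam
        simp only [Fin.le_def, Fin.val_mk]
        omega
      · linarith [hR1 i]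
    · rw [if_neg h]
      have hdi : d i = 0 := by simp [hd, h]
      rw [hdi]
      apply mul_le_mul_of_nonpos_right
      · apply hlam
        simp only [Fin.le_def, Fin.val_mk]
        omega
      · linarith [hR0 i]
  have hsum1 : ∑ i : Fin L, (if (i : ℕ) < K then la * (1 - R i i) else lb * (0 - R i i))
      ≤ ∑ i, lam i * (d i - R i i) :=
    Finset.sum_le_sum fun i _ => hterm i
  have hsplit : ∑ i : Fin L, (if (i : ℕ) < K then la * (1 - R i i) else lb * (0 - R i i))
      = la * ((K : ℝ) - S1) - lb * S2 := by
    have he : ∀ i : Fin L,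
        (if (i : ℕ) < K then la * (1 - R i i) else lb * (0 - R i i))
        = la * (d i - (if (i : ℕ) < K then R i i else 0))
            - lb * (if (i : ℕ) < K then 0 else R i i) := by
      intro i
      by_cases h : (i : ℕ) < K <;> simp [hd, h] <;> ring
    rw [Finset.sum_congr rfl fun i _ => he i]
    rw [Finset.sum_sub_distrib, ← Finset.mul_sum, ← Finset.mul_sum,
      Finset.sum_sub_distrib, hsumd, ← hS1, ← hS2]
  rw [htrA, hfrob, hdR]
  have hge : la * ((K : ℝ) - S1) - lb * S2 ≤ ∑ i, lam i * (d i - R i i) := by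
    rw [← hsplit]; exact hsum1
  have hS2eq : S2 = (K : ℝ) - S1 := by linarith
  rw [hS2eq] at hge
  nlinarith [hge]

/-- Davis–Kahan-type bound. If `G` (resp. `G̃`) consists of
orthonormal eigenvectors of `XXᵀ` (resp. `X̃X̃ᵀ`) for the `K` largest
eigenvalues, and the eigenvalues `λ` of `XXᵀ` (in decreasing order) satisfy
`λ_K > λ_{K+1}`, then
`‖GGᵀ − G̃G̃ᵀ‖_F ≤ (2/(λ_K − λ_{K+1})) ‖XXᵀ − X̃X̃ᵀ‖_F`. -/
theorem stmt_5 (L n K : ℕ) (hK0 : 0 < K) (hKL : K < L)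
    (X Xt : Matrix (Fin L) (Fin n) ℝ)
    (lam : Fin L → ℝ) (hlam : Antitone lam)
    (U : Matrix (Fin L) (Fin L) ℝ) (hU : Uᵀ * U = 1)
    (hX : X * Xᵀ = U * Matrix.diagonal lam * Uᵀ)
    (lamt : Fin L → ℝ) (hlamt : Antitone lamt)
    (Ut : Matrix (Fin L) (Fin L) ℝ) (hUt : Utᵀ * Ut = 1)
    (hXt : Xt * Xtᵀ = Ut * Matrix.diagonal lamt * Utᵀ)
    (G : Matrix (Fin L) (Fin K) ℝ)
    (hG : ∀ i k, G i k = U i (Fin.castLE hKL.le k))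
    (Gt : Matrix (Fin L) (Fin K) ℝ)
    (hGt : ∀ i k, Gt i k = Ut i (Fin.castLE hKL.le k))
    (hgap : lam ⟨K, hKL⟩ < lam ⟨K - 1, by omega⟩) :
    frobNorm (G * Gᵀ - Gt * Gtᵀ) ≤
      (2 / (lam ⟨K - 1, by omega⟩ - lam ⟨K, hKL⟩)) *
        frobNorm (X * Xᵀ - Xt * Xtᵀ) := by
  have hGG : Gᵀ * G = 1 := cols_orthonormal hKL U hU G hG
  have hGtGt : Gtᵀ * Gt = 1 := cols_orthonormal hKL Ut hUt Gt hGt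
  set P : Matrix (Fin L) (Fin L) ℝ := G * Gᵀ with hPdef
  set Q : Matrix (Fin L) (Fin L) ℝ := Gt * Gtᵀ with hQdef
  set A : Matrix (Fin L) (Fin L) ℝ := U * Matrix.diagonal lam * Uᵀ with hAdef
  set At : Matrix (Fin L) (Fin L) ℝ := Ut * Matrix.diagonal lamt * Utᵀ with hAtdef
  have h1 := key_ineq hK0 hKL lam hlam U hU G hG Gt hGtGt
  have h2 := key_ineq hK0 hKL lamt hlamt Ut hUt Gt hGt G hGG
  -- notation
  set la : ℝ := lam ⟨K - 1, by omega⟩ with hla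
  set lb : ℝ := lam ⟨K, hKL⟩ with hlb
  have hδ : 0 < la - lb := by simp only [hla, hlb]; linarith
  set Sf : ℝ := ∑ i, ∑ j, ((P - Q) i j) ^ 2 with hSfdef
  have hSf0 : 0 ≤ Sf :=
    Finset.sum_nonneg fun i _ => Finset.sum_nonneg fun j _ => sq_nonneg _
  have hsumswap : ∑ i, ∑ j, ((Q - P) i j) ^ 2 = Sf := by
    rw [hSfdef]
    apply Finset.sum_congr rfl
    intro i _
    apply Finset.sum_congr rfl
    intro j _
    have h : (Q - P) i j = -((P - Q) i j) := by
      simp [Matrix.sub_apply]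
    rw [h, neg_sq]
  -- h2 gives nonnegativity
  have h2' : 0 ≤ Matrix.trace (At * (Q - P)) := by
    refine le_trans ?_ h2
    rw [hsumswap]
    apply mul_nonneg _ hSf0
    have : lamt ⟨K, hKL⟩ ≤ lamt ⟨K - 1, by omega⟩ := by
      apply hlamt
      simp only [Fin.le_def, Fin.val_mk]
      omega
    linarith
  -- combine traces
  have htr : Matrix.trace (A * (P - Q)) + Matrix.trace (At * (Q - P))
      = Matrix.trace ((A - At) * (P - Q)) := by
    have hneg : At * (Q - P) = -(At * (P - Q)) := by
      rw [← Matrix.mul_neg, neg_sub]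
    rw [Matrix.sub_mul, Matrix.trace_sub, hneg, Matrix.trace_neg]
    ring
  -- symmetry of P - Q
  have hsym : (P - Q)ᵀ = P - Q := by
    rw [Matrix.transpose_sub, hPdef, hQdef, Matrix.transpose_mul,
      Matrix.transpose_mul, Matrix.transpose_transpose, Matrix.transpose_transpose]
  -- trace as entrywise sum
  have htrE : Matrix.trace ((A - At) * (P - Q))
      = ∑ p : Fin L × Fin L, (A - At) p.1 p.2 * (P - Q) p.1 p.2 := by
    rw [Fintype.sum_prod_type]
    simp only [Matrix.trace, Matrix.diag, Matrix.mul_apply]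
    apply Finset.sum_congr rfl
    intro i _
    apply Finset.sum_congr rfl
    intro j _
    have h : (P - Q) j i = (P - Q) i j := by
      have h' := congrFun (congrFun hsym i) j
      rw [Matrix.transpose_apply] at h'
      exact h'
    rw [h]
  -- Cauchy–Schwarz
  have hcs : ∑ p : Fin L × Fin L, (A - At) p.1 p.2 * (P - Q) p.1 p.2
      ≤ frobNorm (A - At) * frobNorm (P - Q) := by
    have h := Finset.sum_mul_sq_le_sq_mul_sq Finset.univ
      (fun p : Fin L × Fin L => (A - At) p.1 p.2)
      (fun p : Fin L × Fin L => (P - Q) p.1 p.2)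
    have hEfr : frobNorm (A - At) = Real.sqrt (∑ p : Fin L × Fin L, ((A - At) p.1 p.2) ^ 2) := by
      rw [frobNorm, Fintype.sum_prod_type]
    have hMfr : frobNorm (P - Q) = Real.sqrt (∑ p : Fin L × Fin L, ((P - Q) p.1 p.2) ^ 2) := by
      rw [frobNorm, Fintype.sum_prod_type]
    rw [hEfr, hMfr]
    calc ∑ p : Fin L × Fin L, (A - At) p.1 p.2 * (P - Q) p.1 p.2
        ≤ |∑ p : Fin L × Fin L, (A - At) p.1 p.2 * (P - Q) p.1 p.2| := le_abs_self _
      _ = Real.sqrt ((∑ p : Fin L × Fin L, (A - At) p.1 p.2 * (P - Q) p.1 p.2) ^ 2) :=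
          (Real.sqrt_sq_eq_abs _).symm
      _ ≤ Real.sqrt ((∑ p : Fin L × Fin L, ((A - At) p.1 p.2) ^ 2) *
            ∑ p : Fin L × Fin L, ((P - Q) p.1 p.2) ^ 2) := Real.sqrt_le_sqrt h
      _ = _ := Real.sqrt_mul (Finset.sum_nonneg fun p _ => sq_nonneg _) _
  -- put it together
  rw [hX, hXt]
  set N : ℝ := frobNorm (P - Q) with hNdef
  set E : ℝ := frobNorm (A - At) with hEdef
  have hN0 : 0 ≤ N := Real.sqrt_nonneg _
  have hE0 : 0 ≤ E := Real.sqrt_nonneg _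
  have hN2 : N ^ 2 = Sf := Real.sq_sqrt hSf0
  have hkey : ((la - lb) / 2) * Sf ≤ E * N := by
    calc ((la - lb) / 2) * Sf ≤ Matrix.trace (A * (P - Q)) := h1
      _ ≤ Matrix.trace (A * (P - Q)) + Matrix.trace (At * (Q - P)) := by linarith
      _ = Matrix.trace ((A - At) * (P - Q)) := htr
      _ = ∑ p : Fin L × Fin L, (A - At) p.1 p.2 * (P - Q) p.1 p.2 := htrE
      _ ≤ E * N := hcs
  rcases eq_or_lt_of_le hN0 with h0 | hNpos
  · rw [← h0]
    positivity
  · rw [div_mul_eq_mul_div, le_div_iff₀ hδ]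
    nlinarith [hkey, hN2, hNpos]
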